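/- Let Ω ⊆ ℝⁿ be open, let F : Ω → Ω be continuously differentiable, and let x̄ ∈ Ω be a fixed point of F such that every complex eigenvalue of the Jacobian matrix F′(x̄) has absolute value strictly smaller than 1. Let |λ_max| denote the largest absolute value of an eigenvalue of F′(x̄). Then for every ε > 0 with |λ_max| + ε < 1 there exist δ > 0 and C > 0 such that for every x ∈ Ω with ‖x − x̄‖ < δ and every k ∈ ℕ, the iterate F^{(k)}(x) is defined and satisfies ‖F^{(k)}(x) − x̄‖ ≤ C·(|λ_max| + ε)^k·‖x − x̄‖; in particular the fixed point iteration converges locally to x̄ with at least linear rate. -/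

import Mathlib

open Matrix Filter

set_option maxHeartbeats 1000000
set_option synthInstance.maxHeartbeats 1000000

private lemma fpll_euclid_coord_le {𝕜 : Type*} [RCLike 𝕜] {n : ℕ} (v : EuclideanSpace 𝕜 (Fin n))
    (j : Fin n) : ‖v j‖ ≤ ‖v‖ := by
  rw [EuclideanSpace.norm_eq, show ‖v j‖ = √(‖v j‖ ^ 2) from (Real.sqrt_sq (norm_nonneg _)).symm]
  apply Real.sqrt_le_sqrt
  exact Finset.single_le_sum (f := fun i => ‖v i‖ ^ 2) (fun i _ => by positivity) (Finset.mem_univ j)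

private lemma fpll_clm_apply_coord {𝕜 : Type*} [RCLike 𝕜] {n : ℕ}
    (M : Matrix (Fin n) (Fin n) 𝕜) (v : EuclideanSpace 𝕜 (Fin n)) (i : Fin n) :
    (toEuclideanCLM (𝕜 := 𝕜) M v) i = ∑ j, M i j * v j := by
  have : (toEuclideanCLM (𝕜 := 𝕜) M v) i = (M *ᵥ (WithLp.equiv _ _ v)) i :=
    congrFun (ofLp_toEuclideanCLM (𝕜 := 𝕜) M v) i
  simpa [Matrix.mulVec, dotProduct] using this

private lemma fpll_real_norm_bound {n : ℕ} (M : Matrix (Fin n) (Fin n) ℝ)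
    (v : EuclideanSpace ℝ (Fin n)) :
    ‖toEuclideanCLM (𝕜 := ℝ) M v‖ ≤ (∑ i, ∑ j, |M i j|) * ‖v‖ := by
  have hcomp : ∀ i, ‖(toEuclideanCLM (𝕜 := ℝ) M v) i‖ ≤ (∑ j, |M i j|) * ‖v‖ := by
    intro i
    rw [fpll_clm_apply_coord, Real.norm_eq_abs, Finset.sum_mul]
    refine (Finset.abs_sum_le_sum_abs _ _).trans (Finset.sum_le_sum fun j _ => ?_)
    rw [abs_mul]
    exact mul_le_mul_of_nonneg_left (fpll_euclid_coord_le v j) (abs_nonneg _)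
  rw [EuclideanSpace.norm_eq]
  have h1 : ∑ i, ‖(toEuclideanCLM (𝕜 := ℝ) M v) i‖ ^ 2
      ≤ (∑ i, ‖(toEuclideanCLM (𝕜 := ℝ) M v) i‖) ^ 2 :=
    Finset.sum_sq_le_sq_sum_of_nonneg (fun i _ => norm_nonneg _)
  have h2 : ∑ i, ‖(toEuclideanCLM (𝕜 := ℝ) M v) i‖ ≤ (∑ i, ∑ j, |M i j|) * ‖v‖ := by
    calc ∑ i, ‖(toEuclideanCLM (𝕜 := ℝ) M v) i‖ ≤ ∑ i, (∑ j, |M i j|) * ‖v‖ :=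
          Finset.sum_le_sum fun i _ => hcomp i
      _ = (∑ i, ∑ j, |M i j|) * ‖v‖ := by rw [Finset.sum_mul]
  have h3 : (0:ℝ) ≤ (∑ i, ∑ j, |M i j|) * ‖v‖ := by positivity
  calc √(∑ i, ‖(toEuclideanCLM (𝕜 := ℝ) M v) i‖ ^ 2)
      ≤ √(((∑ i, ∑ j, |M i j|) * ‖v‖) ^ 2) := by
        apply Real.sqrt_le_sqrt
        exact h1.trans (pow_le_pow_left₀ (Finset.sum_nonneg fun i _ => norm_nonneg _) h2 2)
    _ = (∑ i, ∑ j, |M i j|) * ‖v‖ := by rw [Real.sqrt_sq h3]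

private lemma fpll_entry_le_clm_norm {n : ℕ} (M : Matrix (Fin n) (Fin n) ℂ) (i j : Fin n) :
    ‖M i j‖ ≤ ‖toEuclideanCLM (𝕜 := ℂ) M‖ := by
  have h1 : ‖(toEuclideanCLM (𝕜 := ℂ) M (EuclideanSpace.single j 1)) i‖
      ≤ ‖toEuclideanCLM (𝕜 := ℂ) M‖ := by
    refine (fpll_euclid_coord_le _ i).trans ?_
    calc ‖toEuclideanCLM (𝕜 := ℂ) M (EuclideanSpace.single j 1)‖
        ≤ ‖toEuclideanCLM (𝕜 := ℂ) M‖ * ‖(EuclideanSpace.single j (1:ℂ))‖ :=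
          ContinuousLinearMap.le_opNorm _ _
      _ = ‖toEuclideanCLM (𝕜 := ℂ) M‖ := by rw [EuclideanSpace.norm_single]; simp
  have h2 : (toEuclideanCLM (𝕜 := ℂ) M (EuclideanSpace.single j 1)) i = M i j := by
    rw [fpll_clm_apply_coord]
    simp [EuclideanSpace.single_apply]
  rw [← h2]
  exact h1

private lemma fpll_gelfand_bound {n : ℕ} (Jc : Matrix (Fin n) (Fin n) ℂ) (ρ r : ℝ) (hρ0 : 0 ≤ ρ)
    (hub : ∀ z ∈ spectrum ℂ Jc, ‖z‖ ≤ ρ) (hr : ρ < r) :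
    ∀ᶠ k in atTop, ‖(toEuclideanCLM (𝕜 := ℂ) Jc) ^ k‖ ≤ r ^ k := by
  set a := toEuclideanCLM (𝕜 := ℂ) Jc with ha
  have hspec : spectrum ℂ a = spectrum ℂ Jc :=
    AlgEquiv.spectrum_eq (toEuclideanCLM (𝕜 := ℂ) (n := Fin n)) Jc
  have hrad : spectralRadius ℂ a ≤ ENNReal.ofReal ρ := by
    rw [spectralRadius]
    refine iSup₂_le fun z hz => ?_
    rw [hspec] at hz
    rw [← enorm_eq_nnnorm, ← ofReal_norm]
    exact ENNReal.ofReal_le_ofReal (by simpa using hub z hz)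
  have hlt : Filter.limsup (fun k : ℕ => (‖a ^ k‖₊ : ENNReal) ^ (1 / (k:ℝ))) atTop
      < ENNReal.ofReal r :=
    lt_of_le_of_lt (spectrum.limsup_pow_nnnorm_pow_one_div_le_spectralRadius a)
      (hrad.trans_lt ((ENNReal.ofReal_lt_ofReal_iff (hρ0.trans_lt hr)).mpr hr))
  have hev := Filter.eventually_lt_of_limsup_lt hlt
  filter_upwards [hev, Filter.eventually_ge_atTop 1] with k hk hk1
  have hk0 : (k:ℝ) ≠ 0 := Nat.cast_ne_zero.mpr (by omega)
  have h1 : ((‖a ^ k‖₊ : ENNReal) ^ (1 / (k:ℝ))) ^ (k:ℝ) ≤ (ENNReal.ofReal r) ^ (k:ℝ) :=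
    ENNReal.rpow_le_rpow hk.le (Nat.cast_nonneg k)
  rw [← ENNReal.rpow_mul, one_div_mul_cancel hk0, ENNReal.rpow_one] at h1
  rw [ENNReal.rpow_natCast, ← ENNReal.ofReal_pow (hρ0.trans hr.le)] at h1
  rw [← enorm_eq_nnnorm, ← ofReal_norm] at h1
  exact (ENNReal.ofReal_le_ofReal_iff (pow_nonneg (hρ0.trans hr.le) k)).mp h1

/-- Local convergence of fixed point iterations: if `F : Ω → Ω` is `C¹`, `x̄ ∈ Ω` is a
fixed point whose Jacobian `J` has all complex eigenvalues of absolute value `< 1`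
(with `ρ = |λ_max|` the largest such absolute value), then for every `ε > 0` with
`ρ + ε < 1` there are `δ, C > 0` such that points starting `δ`-close to `x̄` satisfy
`‖F^[k] x − x̄‖ ≤ C (ρ + ε)^k ‖x − x̄‖` for all `k`. -/
theorem fixed_point_iteration_local_linear_convergence
    {n : ℕ} (Ω : Set (EuclideanSpace ℝ (Fin n))) (hΩ : IsOpen Ω)
    (F : EuclideanSpace ℝ (Fin n) → EuclideanSpace ℝ (Fin n))
    (hmaps : Set.MapsTo F Ω Ω) (hF : ContDiffOn ℝ 1 F Ω)
    (xbar : EuclideanSpace ℝ (Fin n)) (hxbar : xbar ∈ Ω) (hfix : F xbar = xbar)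
    (J : Matrix (Fin n) (Fin n) ℝ)
    (hJ : HasFDerivAt F (Matrix.toEuclideanCLM (𝕜 := ℝ) J) xbar)
    (ρ : ℝ)
    (hρ : IsGreatest ((fun z : ℂ => ‖z‖) '' spectrum ℂ (J.map Complex.ofReal)) ρ)
    (hρ1 : ρ < 1) :
    ∀ ε > 0, ρ + ε < 1 →
      ∃ δ > 0, ∃ C > 0, ∀ x ∈ Ω, ‖x - xbar‖ < δ →
        ∀ k : ℕ, F^[k] x ∈ Ω ∧ ‖F^[k] x - xbar‖ ≤ C * (ρ + ε) ^ k * ‖x - xbar‖ := by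
  intro ε hε hεheadline
  obtain ⟨z0, _, hz0⟩ := hρ.1
  have hρ0 : 0 ≤ ρ := hz0 ▸ (norm_nonneg z0)
  set A := toEuclideanCLM (𝕜 := ℝ) J with hA
  set r₀ : ℝ := ρ + ε/4 with hr₀
  set r : ℝ := ρ + ε/2 with hrdef
  set t : ℝ := ρ + ε with htdef
  have hr0pos : 0 < r := by positivity
  have ht0 : 0 < t := by positivity
  have ht1 : t ≤ 1 := hεheadline.le
  -- eventual bound on complex powers
  have E1 : ∀ᶠ k in atTop, ‖(toEuclideanCLM (𝕜 := ℂ) (J.map Complex.ofReal)) ^ k‖ ≤ r₀ ^ k :=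
    fpll_gelfand_bound _ ρ r₀ hρ0 (fun z hz => hρ.2 ⟨z, hz, rfl⟩) (by rw [hr₀]; linarith)
  -- entry sums bounded by complex operator norm
  have E2 : ∀ k : ℕ, (∑ i, ∑ j, |(J ^ k) i j|)
      ≤ (n:ℝ)^2 * ‖(toEuclideanCLM (𝕜 := ℂ) (J.map Complex.ofReal)) ^ k‖ := by
    intro k
    have hmap : (J.map Complex.ofReal) ^ k = (J ^ k).map Complex.ofReal := by
      have : Complex.ofReal = ⇑Complex.ofRealHom := rfl
      rw [this, ← RingHom.mapMatrix_apply, ← RingHom.mapMatrix_apply, map_pow]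
    have hclm : (toEuclideanCLM (𝕜 := ℂ) (J.map Complex.ofReal)) ^ k
        = toEuclideanCLM (𝕜 := ℂ) ((J ^ k).map Complex.ofReal) := by
      rw [← map_pow, hmap]
    rw [hclm]
    have hentry : ∀ i j, |(J ^ k) i j|
        ≤ ‖toEuclideanCLM (𝕜 := ℂ) ((J ^ k).map Complex.ofReal)‖ := by
      intro i j
      have := fpll_entry_le_clm_norm ((J ^ k).map Complex.ofReal) i j
      simpa [Matrix.map_apply] using this
    calc (∑ i, ∑ j, |(J ^ k) i j|)
        ≤ ∑ _i : Fin n, ∑ _j : Fin n, ‖toEuclideanCLM (𝕜 := ℂ) ((J ^ k).map Complex.ofReal)‖ :=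
          Finset.sum_le_sum fun i _ => Finset.sum_le_sum fun j _ => hentry i j
      _ = (n:ℝ)^2 * ‖toEuclideanCLM (𝕜 := ℂ) ((J ^ k).map Complex.ofReal)‖ := by
          simp [Finset.sum_const]; ring
  -- eventual absorption of the constant
  have E3 : ∀ᶠ k in atTop, (n:ℝ)^2 * r₀ ^ k ≤ r ^ k := by
    have hq0 : 0 ≤ r₀ / r := by positivity
    have hq1 : r₀ / r < 1 := by
      rw [div_lt_one hr0pos]; rw [hr₀, hrdef]; linarith
    have htend : Tendsto (fun k : ℕ => (n:ℝ)^2 * (r₀ / r) ^ k) atTop (nhds 0) := by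
      simpa using (tendsto_pow_atTop_nhds_zero_of_lt_one hq0 hq1).const_mul ((n:ℝ)^2)
    filter_upwards [htend.eventually_lt_const one_pos] with k hk
    have : (n:ℝ)^2 * r₀ ^ k = ((n:ℝ)^2 * (r₀ / r) ^ k) * r ^ k := by
      rw [div_pow, mul_assoc, div_mul_cancel₀ _ (pow_ne_zero k hr0pos.ne')]
    rw [this]
    calc ((n:ℝ)^2 * (r₀ / r) ^ k) * r ^ k ≤ 1 * r ^ k :=
          mul_le_mul_of_nonneg_right hk.le (pow_nonneg hr0pos.le k)
      _ = r ^ k := one_mul _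
  obtain ⟨m, hm1, hmS⟩ : ∃ m : ℕ, 1 ≤ m ∧ (∑ i, ∑ j, |(J ^ m) i j|) ≤ r ^ m := by
    have := (E1.and E3).and (Filter.eventually_ge_atTop 1)
    obtain ⟨m, ⟨⟨h1, h3⟩, hm1⟩⟩ := this.exists
    exact ⟨m, hm1, (E2 m).trans ((mul_le_mul_of_nonneg_left h1 (by positivity)).trans h3)⟩
  -- the key power bound over ℝ
  have hAm : ∀ v : EuclideanSpace ℝ (Fin n), ‖(A ^ m) v‖ ≤ r ^ m * ‖v‖ := by
    intro v
    have : (A ^ m) v = toEuclideanCLM (𝕜 := ℝ) (J ^ m) v := by rw [← map_pow]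
    rw [this]
    exact (fpll_real_norm_bound (J ^ m) v).trans
      (mul_le_mul_of_nonneg_right hmS (norm_nonneg v))
  -- adapted norm
  set N : EuclideanSpace ℝ (Fin n) → ℝ :=
    fun v => ∑ k ∈ Finset.range m, ‖(A ^ k) v‖ * r⁻¹ ^ k with hN
  have hNnonneg : ∀ v, 0 ≤ N v := fun v =>
    Finset.sum_nonneg fun k _ => by positivity
  have hNge : ∀ v, ‖v‖ ≤ N v := by
    intro v
    have := Finset.single_le_sum (f := fun k => ‖(A ^ k) v‖ * r⁻¹ ^ k)
      (fun k _ => by positivity) (Finset.mem_range.mpr hm1)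
    simp only [pow_zero, mul_one, ContinuousLinearMap.one_apply] at this
    exact this
  set CN : ℝ := ∑ k ∈ Finset.range m, ‖A ^ k‖ * r⁻¹ ^ k with hCN
  have hCN0 : 0 ≤ CN := Finset.sum_nonneg fun k _ => by positivity
  have hNle : ∀ v, N v ≤ CN * ‖v‖ := by
    intro v
    rw [hCN, Finset.sum_mul]
    refine Finset.sum_le_sum fun k _ => ?_
    rw [mul_right_comm]
    exact mul_le_mul_of_nonneg_right ((A ^ k).le_opNorm v) (by positivity)
  have hNadd : ∀ u v, N (u + v) ≤ N u + N v := by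
    intro u v
    rw [hN, ← Finset.sum_add_distrib]
    refine Finset.sum_le_sum fun k _ => ?_
    rw [← add_mul, map_add]
    exact mul_le_mul_of_nonneg_right (norm_add_le _ _) (by positivity)
  -- contraction of N under A
  have hNA : ∀ v, N (A v) ≤ r * N v := by
    intro v
    have hgm : ‖(A ^ m) v‖ * r⁻¹ ^ m ≤ ‖v‖ := by
      calc ‖(A ^ m) v‖ * r⁻¹ ^ m ≤ (r ^ m * ‖v‖) * r⁻¹ ^ m :=
            mul_le_mul_of_nonneg_right (hAm v) (by positivity)
        _ = ‖v‖ := by rw [mul_comm (r ^ m), mul_assoc, ← mul_pow, mul_inv_cancel₀ hr0pos.ne', one_pow, mul_one]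
    have hstep : N (A v) = r * ∑ k ∈ Finset.range m, ‖(A ^ (k+1)) v‖ * r⁻¹ ^ (k+1) := by
      rw [hN, Finset.mul_sum]
      refine Finset.sum_congr rfl fun k _ => ?_
      have h1 : (A ^ k) (A v) = (A ^ (k+1)) v := by
        rw [pow_succ, ContinuousLinearMap.mul_apply]
      rw [h1, pow_succ]
      field_simp
      have hr : r * (1 / r) = 1 := by rw [one_div, mul_inv_cancel₀ hr0pos.ne']
      linear_combination (-(‖(A ^ k * A) v‖ * (1 / r) ^ k)) * hr
    have hsum : ∑ k ∈ Finset.range m, ‖(A ^ (k+1)) v‖ * r⁻¹ ^ (k+1)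
        = N v + ‖(A ^ m) v‖ * r⁻¹ ^ m - ‖v‖ := by
      have := Finset.sum_range_succ' (fun k => ‖(A ^ k) v‖ * r⁻¹ ^ k) m
      rw [Finset.sum_range_succ (fun k => ‖(A ^ k) v‖ * r⁻¹ ^ k) m] at this
      rw [hN]
      simp only [pow_zero, mul_one] at this ⊢
      simp only [ContinuousLinearMap.one_apply] at this ⊢
      linarith [this]
    rw [hstep, hsum]
    have : N v + ‖(A ^ m) v‖ * r⁻¹ ^ m - ‖v‖ ≤ N v := by linarith [hgm]
    exact mul_le_mul_of_nonneg_left this hr0pos.le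
  -- derivative estimate
  set C : ℝ := CN + 1 with hC
  have hCpos : 0 < C := by positivity
  have hη : (0:ℝ) < ε / 2 / C := by positivity
  have hlo := (hJ.isLittleO).def hη
  rw [Metric.eventually_nhds_iff] at hlo
  obtain ⟨δ₁, hδ₁pos, hδ₁⟩ := hlo
  -- one-step contraction for the adapted norm
  have step : ∀ y, ‖y - xbar‖ < δ₁ → N (F y - xbar) ≤ t * N (y - xbar) := by
    intro y hy
    have herr : ‖F y - F xbar - A (y - xbar)‖ ≤ ε / 2 / C * ‖y - xbar‖ := by
      have := hδ₁ (y := y) (by rwa [dist_eq_norm])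
      simpa using this
    have hdecomp : F y - xbar = A (y - xbar) + (F y - F xbar - A (y - xbar)) := by
      rw [hfix]; abel
    calc N (F y - xbar) ≤ N (A (y - xbar)) + N (F y - F xbar - A (y - xbar)) := by
          rw [hdecomp]; exact hNadd _ _
      _ ≤ r * N (y - xbar) + CN * ‖F y - F xbar - A (y - xbar)‖ :=
          add_le_add (hNA _) (hNle _)
      _ ≤ r * N (y - xbar) + CN * (ε / 2 / C * ‖y - xbar‖) := by
          exact add_le_add (le_refl _) (mul_le_mul_of_nonneg_left herr hCN0)
      _ ≤ r * N (y - xbar) + C * (ε / 2 / C * ‖y - xbar‖) := by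
          have : CN * (ε / 2 / C * ‖y - xbar‖) ≤ C * (ε / 2 / C * ‖y - xbar‖) :=
            mul_le_mul_of_nonneg_right (by rw [hC]; linarith) (by positivity)
          linarith
      _ = r * N (y - xbar) + ε / 2 * ‖y - xbar‖ := by
          field_simp
      _ ≤ r * N (y - xbar) + ε / 2 * N (y - xbar) := by
          have := hNge (y - xbar)
          nlinarith
      _ = t * N (y - xbar) := by rw [htdef, hrdef]; ring
  -- choose δ and C
  refine ⟨δ₁ / C, by positivity, C, hCpos, ?_⟩
  intro x hxΩ hx k
  have hkey : ∀ k : ℕ, F^[k] x ∈ Ω ∧ N (F^[k] x - xbar) ≤ t ^ k * N (x - xbar) := by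
    intro k
    induction k with
    | zero => exact ⟨hxΩ, by simp⟩
    | succ k ih =>
      have hyΩ := ih.1
      have hyb : ‖F^[k] x - xbar‖ < δ₁ := by
        have h1 : ‖F^[k] x - xbar‖ ≤ N (F^[k] x - xbar) := hNge _
        have h2 : N (F^[k] x - xbar) ≤ t ^ k * N (x - xbar) := ih.2
        have h3 : t ^ k * N (x - xbar) ≤ N (x - xbar) := by
          have := pow_le_one₀ ht0.le ht1 (n := k)
          nlinarith [hNnonneg (x - xbar)]
        have h4 : N (x - xbar) ≤ CN * ‖x - xbar‖ := hNle _
        have h5 : CN * ‖x - xbar‖ ≤ C * ‖x - xbar‖ :=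
          mul_le_mul_of_nonneg_right (by rw [hC]; linarith) (norm_nonneg _)
        have h6 : C * ‖x - xbar‖ < C * (δ₁ / C) :=
          mul_lt_mul_of_pos_left hx hCpos
        have h7 : C * (δ₁ / C) = δ₁ := by field_simp
        calc ‖F^[k] x - xbar‖ ≤ N (F^[k] x - xbar) := h1
          _ ≤ t ^ k * N (x - xbar) := h2
          _ ≤ N (x - xbar) := h3
          _ ≤ CN * ‖x - xbar‖ := h4
          _ ≤ C * ‖x - xbar‖ := h5
          _ < C * (δ₁ / C) := h6
          _ = δ₁ := h7
      refine ⟨?_, ?_⟩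
      · rw [Function.iterate_succ_apply']
        exact hmaps hyΩ
      · rw [Function.iterate_succ_apply']
        calc N (F (F^[k] x) - xbar) ≤ t * N (F^[k] x - xbar) := step _ hyb
          _ ≤ t * (t ^ k * N (x - xbar)) := mul_le_mul_of_nonneg_left ih.2 ht0.le
          _ = t ^ (k+1) * N (x - xbar) := by ring
  refine ⟨(hkey k).1, ?_⟩
  calc ‖F^[k] x - xbar‖ ≤ N (F^[k] x - xbar) := hNge _
    _ ≤ t ^ k * N (x - xbar) := (hkey k).2
    _ ≤ t ^ k * (CN * ‖x - xbar‖) :=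
        mul_le_mul_of_nonneg_left (hNle _) (pow_nonneg ht0.le k)
    _ ≤ t ^ k * (C * ‖x - xbar‖) := by
        have : CN * ‖x - xbar‖ ≤ C * ‖x - xbar‖ :=
          mul_le_mul_of_nonneg_right (by rw [hC]; linarith) (norm_nonneg _)
        exact mul_le_mul_of_nonneg_left this (pow_nonneg ht0.le k)
    _ = C * t ^ k * ‖x - xbar‖ := by ring
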